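/- arXiv:1301.2182 — 2 statements merged into one kernel-verified Lean document; each statement's English description precedes it below -/
import Mathlib

section
/- Let η : [0,T) → ℝ be a continuously differentiable function with η(0) = 0, and suppose there exist a continuous function β : ℝ → ℝ with β(0) = 0 and β nonnegative on [0,∞), and a constant θ > 0, such that for all t ∈ [0,T), η'(t) ≥ -β(η(t)) - (1/θ)·η(t). If additionally β is locally Lipschitz, then η(t) ≥ 0 for all t ∈ [0,T). -/
open Set

theorem stmt_0 (T : ℝ) (η η' β : ℝ → ℝ) (θ : ℝ) (hθ : 0 < θ)
    (hη0 : η 0 = 0)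
    (hderiv : ∀ t ∈ Ico (0:ℝ) T, HasDerivAt η (η' t) t)
    (hη'cont : ContinuousOn η' (Ico (0:ℝ) T))
    (hβcont : Continuous β) (hβ0 : β 0 = 0)
    (hβpos : ∀ r : ℝ, 0 ≤ r → 0 ≤ β r)
    (hβlip : LocallyLipschitz β)
    (hineq : ∀ t ∈ Ico (0:ℝ) T, -β (η t) - (1/θ) * η t ≤ η' t) :
    ∀ t ∈ Ico (0:ℝ) T, 0 ≤ η t := by
  intro t1 ht1
  by_contra hneg
  push_neg at hneg
  obtain ⟨ht10, ht1T⟩ := ht1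
  have hsub : Icc (0:ℝ) t1 ⊆ Ico (0:ℝ) T := fun s hs => ⟨hs.1, lt_of_le_of_lt hs.2 ht1T⟩
  have hηcont : ContinuousOn η (Icc (0:ℝ) t1) := fun s hs =>
    ((hderiv s (hsub hs)).continuousAt).continuousWithinAt
  -- the set where η is nonnegative
  set S : Set ℝ := Icc (0:ℝ) t1 ∩ η ⁻¹' (Ici 0) with hS
  have hSclosed : IsClosed S :=
    hηcont.preimage_isClosed_of_isClosed isClosed_Icc isClosed_Ici
  have hS0 : (0:ℝ) ∈ S := ⟨⟨le_refl 0, ht10⟩, by simp [hη0]⟩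
  have hSne : S.Nonempty := ⟨0, hS0⟩
  have hSbdd : BddAbove S := ⟨t1, fun s hs => hs.1.2⟩
  set t₀ := sSup S with ht₀
  have ht₀S : t₀ ∈ S := hSclosed.csSup_mem hSne hSbdd
  have ht₀0 : 0 ≤ t₀ := ht₀S.1.1
  have ht₀le : t₀ ≤ t1 := ht₀S.1.2
  have hηt₀ : 0 ≤ η t₀ := ht₀S.2
  have ht₀lt : t₀ < t1 := by
    rcases lt_or_eq_of_le ht₀le with h | h
    · exact h
    · exfalso; rw [h] at hηt₀; linarith
  -- η is negative strictly after t₀ (up to t1)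
  have hafter : ∀ s, t₀ < s → s ≤ t1 → η s < 0 := by
    intro s hs1 hs2
    by_contra h
    push_neg at h
    have : s ∈ S := ⟨⟨le_trans ht₀0 hs1.le, hs2⟩, h⟩
    exact absurd (le_csSup hSbdd this) (not_le.mpr hs1)
  -- η t₀ = 0
  have hηt₀0 : η t₀ = 0 := by
    have hc : Filter.Tendsto η (nhdsWithin t₀ (Ioi t₀)) (nhds (η t₀)) :=
      ((hderiv t₀ (hsub ⟨ht₀0, ht₀le⟩)).continuousAt).continuousWithinAt
    have hev : ∀ᶠ s in nhdsWithin t₀ (Ioi t₀), η s ≤ 0 := by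
      filter_upwards [Ioc_mem_nhdsGT ht₀lt] with s hs
      exact (hafter s hs.1 hs.2).le
    have : η t₀ ≤ 0 := le_of_tendsto hc hev
    linarith
  -- local Lipschitz constant near 0
  obtain ⟨K, U, hU, hlip⟩ := hβlip 0
  obtain ⟨ε, hε, hball⟩ := Metric.mem_nhds_iff.mp hU
  -- continuity of η at t₀ gives a small interval where |η| < ε
  have hcontt₀ : ContinuousAt η t₀ := (hderiv t₀ (hsub ⟨ht₀0, ht₀le⟩)).continuousAt
  obtain ⟨δ, hδ, hδball⟩ := Metric.continuousAt_iff.mp hcontt₀ ε hε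
  set t₂ := min (t₀ + δ / 2) t1 with ht₂
  have ht₂gt : t₀ < t₂ := lt_min (by linarith) ht₀lt
  have ht₂le : t₂ ≤ t1 := min_le_right _ _
  have hIcc_sub : Icc t₀ t₂ ⊆ Ico (0:ℝ) T := fun s hs =>
    hsub ⟨le_trans ht₀0 hs.1, le_trans hs.2 ht₂le⟩
  have hsmall : ∀ s ∈ Icc t₀ t₂, η s ∈ Metric.ball (0:ℝ) ε := by
    intro s hs
    have h1 : |s - t₀| < δ := by
      rw [abs_sub_lt_iff]
      constructor
      · have : s ≤ t₀ + δ / 2 := le_trans hs.2 (min_le_left _ _)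
        linarith
      · linarith [hs.1]
    have := hδball (show dist s t₀ < δ by rwa [Real.dist_eq])
    rw [Real.dist_eq, hηt₀0, sub_zero] at this
    simpa [Real.dist_eq] using this
  set C : ℝ := (K : ℝ) + 1 / θ with hC
  set φ : ℝ → ℝ := fun s => η s * Real.exp (-C * s) with hφ
  have hφderiv : ∀ s ∈ Icc t₀ t₂,
      HasDerivAt φ ((η' s - C * η s) * Real.exp (-C * s)) s := by
    intro s hs
    have h1 := (hderiv s (hIcc_sub hs)).mul
      (((hasDerivAt_id s).const_mul (-C)).exp)
    refine h1.congr_deriv ?_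
    simp [mul_comm]
    ring
  -- derivative of φ is nonnegative on the interior
  have hφmono : MonotoneOn φ (Icc t₀ t₂) := by
    apply monotoneOn_of_deriv_nonneg (convex_Icc _ _)
    · exact fun s hs => ((hφderiv s hs).continuousAt).continuousWithinAt
    · rw [interior_Icc]
      exact fun s hs => ((hφderiv s (Ioo_subset_Icc_self hs)).differentiableAt).differentiableWithinAt
    · rw [interior_Icc]
      intro s hs
      rw [(hφderiv s (Ioo_subset_Icc_self hs)).deriv]
      have hηs : η s < 0 := hafter s hs.1 (le_trans hs.2.le ht₂le)
      -- Lipschitz bound: β (η s) ≤ K * (-η s)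
      have hmem : η s ∈ U := hball (hsmall s (Ioo_subset_Icc_self hs))
      have hmem0 : (0:ℝ) ∈ U := hball (Metric.mem_ball_self hε)
      have hd := hlip.dist_le_mul (η s) hmem 0 hmem0
      rw [hβ0, Real.dist_eq, Real.dist_eq, sub_zero, sub_zero,
        abs_of_neg hηs] at hd
      have hβle : β (η s) ≤ (K : ℝ) * (-η s) := le_trans (le_abs_self _) hd
      have hineq' := hineq s (hIcc_sub (Ioo_subset_Icc_self hs))
      have h2 : C * η s ≤ η' s := by
        have : (1/θ) * η s ≤ -((1/θ) * η s) := by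
          have : (1/θ) * η s ≤ 0 :=
            mul_nonpos_of_nonneg_of_nonpos (by positivity) hηs.le
          linarith
        rw [hC]
        nlinarith [hβle, hineq', this]
      have hexp : 0 < Real.exp (-C * s) := Real.exp_pos _
      nlinarith
  have h1 : φ t₀ ≤ φ t₂ :=
    hφmono (left_mem_Icc.mpr ht₂gt.le) (right_mem_Icc.mpr ht₂gt.le) ht₂gt.le
  have hφt₀ : φ t₀ = 0 := by simp [hφ, hηt₀0]
  have hφt₂ : φ t₂ < 0 := by
    have hηt₂ : η t₂ < 0 := hafter t₂ ht₂gt ht₂le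
    have : 0 < Real.exp (-C * t₂) := Real.exp_pos _
    exact mul_neg_of_neg_of_pos hηt₂ this
  linarith
end

section
/- Let V, η : [0,∞) → ℝ be differentiable with η ≥ 0, κ > 0, σ ∈ (0,1), λ = (1-σ)κ, and suppose: V'(t) ≤ -q(t) + p(t) and η'(t) = -λη(t) + σq(t) - p(t), where q(t) ≥ κV(t) ≥ 0 for all t. Then W(t) = V(t) + η(t) satisfies W'(t) ≤ (σ-1)κ·W(t), and hence V(t) ≤ (V(0) + η(0))·e^{(σ-1)κt} for all t ≥ 0. -/
open Set

theorem stmt_17 (V η V' q p : ℝ → ℝ) (κ σ lam : ℝ)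
    (hκ : 0 < κ) (hσ : σ ∈ Ioo (0:ℝ) 1) (hlam : lam = (1 - σ) * κ)
    (hηpos : ∀ t ∈ Ici (0:ℝ), 0 ≤ η t)
    (hVderiv : ∀ t ∈ Ici (0:ℝ), HasDerivAt V (V' t) t)
    (hVbound : ∀ t ∈ Ici (0:ℝ), V' t ≤ -q t + p t)
    (hηderiv : ∀ t ∈ Ici (0:ℝ),
      HasDerivAt η (-lam * η t + σ * q t - p t) t)
    (hVpos : ∀ t ∈ Ici (0:ℝ), 0 ≤ V t)
    (hq : ∀ t ∈ Ici (0:ℝ), κ * V t ≤ q t) :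
    (∀ t ∈ Ici (0:ℝ),
      V' t + (-lam * η t + σ * q t - p t) ≤ (σ - 1) * κ * (V t + η t)) ∧
    ∀ t ∈ Ici (0:ℝ), V t ≤ (V 0 + η 0) * Real.exp ((σ - 1) * κ * t) := by
  obtain ⟨hσ0, hσ1⟩ := hσ
  have key : ∀ t ∈ Ici (0:ℝ),
      V' t + (-lam * η t + σ * q t - p t) ≤ (σ - 1) * κ * (V t + η t) := by
    intro t ht
    have h1 := hVbound t ht
    have h2 := hq t ht
    have : V' t + (-lam * η t + σ * q t - p t) ≤ (σ - 1) * q t - lam * η t := by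
      nlinarith
    refine this.trans ?_
    have : (σ - 1) * q t ≤ (σ - 1) * (κ * V t) := by
      apply mul_le_mul_of_nonpos_left h2 (by linarith)
    rw [hlam]; nlinarith
  refine ⟨key, ?_⟩
  intro t ht
  have hW : ∀ x ∈ Icc (0:ℝ) t, V x + η x ≤
      gronwallBound (V 0 + η 0) ((σ - 1) * κ) 0 (x - 0) := by
    apply le_gronwallBound_of_liminf_deriv_right_le
      (f' := fun x => V' x + (-lam * η x + σ * q x - p x))
    · intro x hx
      exact ((hVderiv x hx.1).add (hηderiv x hx.1)).continuousAt.continuousWithinAt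
    · intro x hx r hr
      have hd : HasDerivWithinAt (fun x => V x + η x)
          (V' x + (-lam * η x + σ * q x - p x)) (Ici x) x :=
        ((hVderiv x hx.1).add (hηderiv x hx.1)).hasDerivWithinAt
      exact hd.liminf_right_slope_le hr
    · exact le_rfl
    · intro x hx
      have := key x hx.1
      linarith
  have := hW t ⟨ht, le_refl t⟩
  rw [sub_zero, gronwallBound_ε0] at this
  have hη := hηpos t ht
  linarith
end
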